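/- Suppose dim H₀ = 1 with generator ω, let T be a finite-dimensional vector space of pairwise commuting infinitesimal variations of a weight-4 polarized structure such that the linear map T → H₁, θ ↦ θ₀(ω), is an isomorphism, and let ζ ∈ H₂. Define the bilinear form Q_ζ on T by Q_ζ(θ, θ') = Q₂(θ₁(θ'₀(ω)), ζ), and set T_ζ = { θ ∈ T : θ₂(ζ) = 0 }. Then Q_ζ is symmetric, and dim T − dim T_ζ = rank Q_ζ (the rank of the associated linear map T → T*). -/

import Mathlib

set_option synthInstance.maxHeartbeats 400000
set_option maxHeartbeats 800000


open Module

/-- Proposition 5.20, Calabi–Yau fourfold case: if `dim H₀ = 1` with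
generator `ω`, `T` is a space of pairwise commuting infinitesimal variations such that
`θ ↦ θ₀ ω` is an isomorphism `T ≅ H₁`, and `ζ ∈ H₂`, then the bilinear form
`Q_ζ(θ, θ') = Q₂(θ₁(θ'₀ ω), ζ)` on `T` is symmetric, and
`dim T − dim T_ζ = rank Q_ζ` where `T_ζ = {θ ∈ T : θ₂ ζ = 0}`. -/
theorem calabi_yau_fourfold_rank
    (H0 H1 H2 H3 H4 : Type*)
    [AddCommGroup H0] [Module ℂ H0] [FiniteDimensional ℂ H0]
    [AddCommGroup H1] [Module ℂ H1] [FiniteDimensional ℂ H1]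
    [AddCommGroup H2] [Module ℂ H2] [FiniteDimensional ℂ H2]
    [AddCommGroup H3] [Module ℂ H3] [FiniteDimensional ℂ H3]
    [AddCommGroup H4] [Module ℂ H4] [FiniteDimensional ℂ H4]
    (Q0 : H0 →ₗ[ℂ] H4 →ₗ[ℂ] ℂ) (Q1 : H1 →ₗ[ℂ] H3 →ₗ[ℂ] ℂ)
    (Q2 : H2 →ₗ[ℂ] H2 →ₗ[ℂ] ℂ)
    (hQ0l : ∀ u, (∀ v, Q0 u v = 0) → u = 0)
    (hQ0r : ∀ v, (∀ u, Q0 u v = 0) → v = 0)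
    (hQ1l : ∀ u, (∀ v, Q1 u v = 0) → u = 0)
    (hQ1r : ∀ v, (∀ u, Q1 u v = 0) → v = 0)
    (hQ2l : ∀ u, (∀ v, Q2 u v = 0) → u = 0)
    (hQ2sym : ∀ u v, Q2 u v = Q2 v u)
    -- `dim H₀ = 1` with generator `ω`
    (ω : H0) (hω : ω ≠ 0) (hH0 : finrank ℂ H0 = 1)
    -- `T` is a space of infinitesimal variations `θ = (θ₀, θ₁, θ₂, θ₃)`
    (T : Submodule ℂ ((H0 →ₗ[ℂ] H1) × (H1 →ₗ[ℂ] H2) × (H2 →ₗ[ℂ] H3) × (H3 →ₗ[ℂ] H4)))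
    (hvar : ∀ θ ∈ T,
      (∀ u v, Q1 (θ.1 u) v + Q0 u (θ.2.2.2 v) = 0) ∧
      (∀ u v, Q2 (θ.2.1 u) v + Q1 u (θ.2.2.1 v) = 0))
    (hcomm : ∀ θ ∈ T, ∀ ψ ∈ T,
      (∀ u, θ.2.1 (ψ.1 u) = ψ.2.1 (θ.1 u)) ∧
      (∀ u, θ.2.2.1 (ψ.2.1 u) = ψ.2.2.1 (θ.2.1 u)) ∧
      (∀ u, θ.2.2.2 (ψ.2.2.1 u) = ψ.2.2.2 (θ.2.2.1 u)))
    -- the map `θ ↦ θ₀ ω` is an isomorphism `T → H₁`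
    (hbij : Function.Bijective (fun θ : ↥T => (θ : (H0 →ₗ[ℂ] H1) × (H1 →ₗ[ℂ] H2) ×
      (H2 →ₗ[ℂ] H3) × (H3 →ₗ[ℂ] H4)).1 ω))
    (ζ : H2)
    -- `T_ζ = { θ ∈ T : θ₂ ζ = 0 }`
    (Tζ : Submodule ℂ ((H0 →ₗ[ℂ] H1) × (H1 →ₗ[ℂ] H2) × (H2 →ₗ[ℂ] H3) × (H3 →ₗ[ℂ] H4)))
    (hTζ : ∀ θ, θ ∈ Tζ ↔ θ ∈ T ∧ θ.2.2.1 ζ = 0)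
    -- `L` is the linear map `T → T*` associated to the bilinear form `Q_ζ`
    (L : ↥T →ₗ[ℂ] (↥T →ₗ[ℂ] ℂ))
    (hL : ∀ θ θ' : ↥T, L θ θ' =
      Q2 ((θ : (H0 →ₗ[ℂ] H1) × (H1 →ₗ[ℂ] H2) × (H2 →ₗ[ℂ] H3) × (H3 →ₗ[ℂ] H4)).2.1
        (((θ' : (H0 →ₗ[ℂ] H1) × (H1 →ₗ[ℂ] H2) × (H2 →ₗ[ℂ] H3) × (H3 →ₗ[ℂ] H4)).1) ω)) ζ) :
    (∀ θ θ' : ↥T, L θ θ' = L θ' θ) ∧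
      finrank ℂ ↥T = finrank ℂ ↥Tζ + finrank ℂ ↥(LinearMap.range L) := by
  -- symmetry
  have hsym : ∀ θ θ' : ↥T, L θ θ' = L θ' θ := by
    intro θ θ'
    rw [hL, hL]
    congr 2
    exact (hcomm _ θ.2 _ θ'.2).1 ω
  refine ⟨hsym, ?_⟩
  -- kernel characterization
  have hker : ∀ θ : ↥T, θ ∈ LinearMap.ker L ↔
      (θ : (H0 →ₗ[ℂ] H1) × (H1 →ₗ[ℂ] H2) × (H2 →ₗ[ℂ] H3) × (H3 →ₗ[ℂ] H4)).2.2.1 ζ = 0 := by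
    intro θ
    constructor
    · intro h
      apply hQ1r
      intro u
      obtain ⟨θ', hθ'⟩ := hbij.2 u
      have hv := (hvar _ θ.2).2 ((θ' : (H0 →ₗ[ℂ] H1) × (H1 →ₗ[ℂ] H2) ×
        (H2 →ₗ[ℂ] H3) × (H3 →ₗ[ℂ] H4)).1 ω) ζ
      have hz : L θ θ' = 0 := by
        rw [LinearMap.mem_ker] at h
        rw [h]; rfl
      rw [hL] at hz
      rw [hz] at hv
      rw [← hθ']
      simpa using hv
    · intro h
      rw [LinearMap.mem_ker]
      ext θ'
      have hv := (hvar _ θ.2).2 ((θ' : (H0 →ₗ[ℂ] H1) × (H1 →ₗ[ℂ] H2) ×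
        (H2 →ₗ[ℂ] H3) × (H3 →ₗ[ℂ] H4)).1 ω) ζ
      rw [h] at hv
      simp only [map_zero, LinearMap.zero_apply, add_zero] at hv
      simp [hL, hv]
  -- Tζ ≤ T
  have hle : Tζ ≤ T := fun x hx => ((hTζ x).1 hx).1
  have heq : Tζ.comap T.subtype = LinearMap.ker L := by
    ext x
    simp only [Submodule.mem_comap, Submodule.coe_subtype, hTζ, hker]
    exact ⟨fun h => h.2, fun h => ⟨x.2, h⟩⟩
  have hfin : finrank ℂ ↥Tζ = finrank ℂ ↥(LinearMap.ker L) := by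
    rw [← heq]
    exact (Submodule.comapSubtypeEquivOfLe hle).finrank_eq.symm
  rw [hfin, add_comm]
  exact (LinearMap.finrank_range_add_finrank_ker L).symm
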